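/- arXiv:1801.07029 — 9 statements merged into one kernel-verified Lean document; each statement's English description precedes it below -/
import Mathlib

section
/- For every odd integer P ≥ 3 there exists a routed network that admits a (2,1)-periodic assignment but admits no (P,1)-periodic assignment; hence the existence of a (P,τ)-periodic assignment of a routed network is not monotone in the period P. -/
/-- The set of `τ` consecutive residues modulo `P` starting at `t`. -/
def slotSet (P τ : ℕ) (t : ℤ) : Set (ZMod P) :=
  {s | ∃ k : ℕ, k < τ ∧ s = ((t + k : ℤ) : ZMod P)}

/-- The arcs of a route: its pairs of consecutive vertices. -/
def arcs {V : Type*} (r : List V) : List (V × V) := r.zip r.tail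

/-- Latency of the `i`-th vertex of the route `r`: the sum of the weights of the
first `i` arcs of `r`. -/
def latency {V : Type*} (ω : V → V → ℕ) (r : List V) (i : ℕ) : ℕ :=
  (((arcs r).map fun p => ω p.1 p.2).take i).sum

/-- Two routes with given offsets collide if they share an arc `(u, v)` and
their slot sets at `u` intersect. -/
def Collide {V : Type*} (ω : V → V → ℕ) (P τ : ℕ)
    (r₁ r₂ : List V) (m₁ m₂ : ℤ) : Prop :=
  ∃ i j : ℕ, i + 1 < r₁.length ∧ j + 1 < r₂.length ∧
    r₁[i]? = r₂[j]? ∧ r₁[i + 1]? = r₂[j + 1]? ∧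
    (slotSet P τ (m₁ + latency ω r₁ i) ∩ slotSet P τ (m₂ + latency ω r₂ j)).Nonempty

/-- A `(P,τ)`-periodic assignment: offsets such that no two distinct routes collide. -/
def IsPeriodicAssignment {V ι : Type*} (ω : V → V → ℕ) (routes : ι → List V)
    (P τ : ℕ) (m : ι → ℤ) : Prop :=
  ∀ a b : ι, a ≠ b → ¬ Collide ω P τ (routes a) (routes b) (m a) (m b)

/-- A routed network: a finite vertex type, a weight function, and a finite
family of routes, each a list of pairwise distinct vertices. -/
structure RoutedNetwork where
  V : Type
  ι : Type
  fintypeV : Fintype V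
  fintypeι : Fintype ι
  ω : V → V → ℕ
  routes : ι → List V
  nodup : ∀ i, (routes i).Nodup

lemma sum_parity (k : ℕ) : ((List.range k).map (· % 2)).sum = k / 2 := by
  induction k with
  | zero => simp
  | succ n ih =>
    rw [List.range_succ, List.map_append, List.sum_append]
    simp [ih]; omega

lemma lat_aux (n : ℕ) (f : Fin n → Fin n)
    (hf : ∀ t : Fin n, (f t).val % 2 = (t : ℕ) % 2) (i : ℕ) (hi : i < n) :
    latency (fun a _ => (a : Fin n).val % 2) (List.ofFn f) i = i / 2 := by
  have h1 : ((arcs (List.ofFn f)).map fun p => (p.1 : Fin n).val % 2)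
      = (List.range (n-1)).map (· % 2) := by
    apply List.ext_getElem
    · simp [arcs, List.length_zip]
    · intro t h1 h2
      simp only [List.getElem_map, arcs, List.getElem_zip, List.getElem_tail,
        List.getElem_ofFn, List.getElem_range]
      exact hf _
  show (((arcs (List.ofFn f)).map fun p => (p.1 : Fin n).val % 2).take i).sum = i / 2
  rw [h1, ← List.map_take, List.take_range, sum_parity]
  omega

lemma getq_ofFn {n : ℕ} (f : Fin n → Fin n) (i : ℕ) (hi : i < n) :
    (List.ofFn f)[i]? = some (f ⟨i, hi⟩) := by
  simp [List.getElem?_ofFn, hi]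

/-- For every odd `P ≥ 3` there is a routed network admitting a `(2,1)`-periodic
assignment but no `(P,1)`-periodic assignment: existence of a `(P,τ)`-periodic
assignment is not monotone in the period. -/
theorem non_monotone_in_period (P : ℕ) (hodd : Odd P) (hP : 3 ≤ P) :
    ∃ N : RoutedNetwork,
      (∃ m : N.ι → ℤ, IsPeriodicAssignment N.ω N.routes 2 1 m) ∧
      ¬ (∃ m : N.ι → ℤ, IsPeriodicAssignment N.ω N.routes P 1 m) := by
  obtain ⟨q, hq⟩ := hodd
  set n := 2 * P with hn
  have hσlt : ∀ x : Fin n, 2 * (P - 1 - (x : ℕ) / 2) + (x : ℕ) % 2 < n := fun x => by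
    have := x.2; omega
  set σ : Fin n → Fin n := fun x => ⟨2 * (P - 1 - (x : ℕ) / 2) + (x : ℕ) % 2, hσlt x⟩
    with hσ
  set ω : Fin n → Fin n → ℕ := fun a _ => (a : ℕ) % 2 with hω
  set g : Fin 2 → Fin n → Fin n := ![id, σ] with hg
  have hg0 : g 0 = id := rfl
  have hg1 : g 1 = σ := rfl
  have hgpar : ∀ b (t : Fin n), (g b t).val % 2 = (t : ℕ) % 2 := by
    intro b t
    fin_cases b
    · rfl
    · show (σ t).val % 2 = (t : ℕ) % 2
      simp only [hσ]
      omega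
  have hnodup : ∀ b : Fin 2, (List.ofFn (g b)).Nodup := by
    intro b
    rw [List.nodup_ofFn]
    intro x y hxy
    fin_cases b
    · exact hxy
    · have hx := x.2
      have hy := y.2
      have h : (σ x : ℕ) = (σ y : ℕ) := by
        rw [show σ x = σ y from hxy]
      simp only [hσ] at h
      exact Fin.ext (by omega)
  have hlat : ∀ (b : Fin 2) (i : ℕ), i < n → latency ω (List.ofFn (g b)) i = i / 2 :=
    fun b i hi => lat_aux n (g b) (hgpar b) i hi
  have part1 : ∃ m : Fin 2 → ℤ,
      IsPeriodicAssignment ω (fun b : Fin 2 => List.ofFn (g b)) 2 1 m := by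
    refine ⟨fun b => ((b : ℕ) : ℤ), ?_⟩
    rintro a b hab ⟨i, j, hi, hj, h1, h2, s, hs1, hs2⟩
    simp only [List.length_ofFn] at hi hj
    rw [getq_ofFn _ i (by omega), getq_ofFn _ j (by omega)] at h1
    rw [getq_ofFn _ (i+1) hi, getq_ofFn _ (j+1) hj] at h2
    have h1' : ((g a ⟨i, by omega⟩ : Fin n) : ℕ) = ((g b ⟨j, by omega⟩ : Fin n) : ℕ) := by
      rw [Option.some_inj.mp h1]
    have h2' : ((g a ⟨i+1, hi⟩ : Fin n) : ℕ) = ((g b ⟨j+1, hj⟩ : Fin n) : ℕ) := by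
      rw [Option.some_inj.mp h2]
    have ha2 : (a : ℕ) < 2 := a.2
    have hb2 : (b : ℕ) < 2 := b.2
    have hab' : (a : ℕ) ≠ (b : ℕ) := fun h => hab (Fin.ext h)
    have hgval : ∀ (b : Fin 2) (t : Fin n), ((g b t : Fin n) : ℕ) =
        if (b : ℕ) = 0 then (t : ℕ) else 2 * (P - 1 - (t : ℕ) / 2) + (t : ℕ) % 2 := by
      intro b t
      fin_cases b
      · rfl
      · rfl
    have key : i % 2 = 0 ∧ j % 2 = 0 ∧ i / 2 + j / 2 = P - 1 := by
      rw [hgval, hgval] at h1' h2'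
      simp only [Fin.val_mk] at h1' h2'
      split_ifs at h1' h2' <;> omega
    obtain ⟨k1, hk1, hsk1⟩ := hs1
    obtain ⟨k2, hk2, hsk2⟩ := hs2
    dsimp only at hsk1 hsk2
    interval_cases k1
    interval_cases k2
    rw [hlat a i (by omega)] at hsk1
    rw [hlat b j (by omega)] at hsk2
    rw [hsk1] at hsk2
    rw [ZMod.intCast_eq_intCast_iff] at hsk2
    rw [Int.ModEq] at hsk2
    omega
  have part2 : ¬ ∃ m : Fin 2 → ℤ,
      IsPeriodicAssignment ω (fun b : Fin 2 => List.ofFn (g b)) P 1 m := by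
    rintro ⟨m, hm⟩
    set c : ℤ := m 1 - m 0 + (P - 1) with hc
    have hPpos : (0:ℤ) < P := by positivity
    set d : ℤ := c % P with hd
    have hd0 : 0 ≤ d := Int.emod_nonneg c (by positivity)
    have hdP : d < P := Int.emod_lt_of_pos c hPpos
    have hdvd : (P : ℤ) ∣ c - d := by
      refine ⟨c / P, ?_⟩
      rw [hd, Int.emod_def]; ring
    set k : ℕ := if 2 ∣ d then d.toNat / 2 else (d.toNat + P) / 2 with hk
    have hkP : k < P := by
      rcases em (2 ∣ d) with h2 | h2 <;> simp only [hk, if_pos, if_neg, h2, ite_true,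
        ite_false] <;> omega
    have hkmod : (P : ℤ) ∣ c - 2 * k := by
      rcases em (2 ∣ d) with h2 | h2
      · have hke : (2:ℤ) * k = d := by
          simp only [hk, if_pos h2]
          obtain ⟨e, he⟩ := h2
          push_cast
          omega
        have he2 : c - 2 * k = c - d := by omega
        rw [he2]; exact hdvd
      · have hke : (2:ℤ) * k = d + P := by
          simp only [hk, if_neg h2]
          push_cast
          omega
        have he2 : c - 2 * k = (c - d) - P := by omega
        rw [he2]
        exact dvd_sub hdvd dvd_rfl
    refine hm 0 1 (by decide) ⟨2 * k, 2 * (P - 1 - k), ?_, ?_, ?_, ?_, ?_⟩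
    · simp only [List.length_ofFn]; omega
    · simp only [List.length_ofFn]; omega
    · rw [getq_ofFn _ (2*k) (by omega), getq_ofFn _ (2*(P-1-k)) (by omega)]
      congr 1
      apply Fin.ext
      rw [hg0, hg1]
      simp only [hσ, id_eq]
      omega
    · rw [getq_ofFn _ (2*k+1) (by omega), getq_ofFn _ (2*(P-1-k)+1) (by omega)]
      congr 1
      apply Fin.ext
      rw [hg0, hg1]
      simp only [hσ, id_eq]
      omega
    · refine ⟨((m 0 + latency ω (List.ofFn (g 0)) (2*k) : ℤ) : ZMod P), ⟨0, one_pos, by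
        push_cast; ring⟩, ⟨0, one_pos, ?_⟩⟩
      rw [hlat 0 (2*k) (by omega), hlat 1 (2*(P-1-k)) (by omega)]
      rw [ZMod.intCast_eq_intCast_iff]
      have h1 : (2*k)/2 = k := by omega
      have h2 : (2*(P-1-k))/2 = P-1-k := by omega
      rw [h1, h2, Int.modEq_iff_dvd]
      obtain ⟨e, he⟩ := hkmod
      have hcast : ((P - 1 - k : ℕ) : ℤ) = (P:ℤ) - 1 - k := by
        omega
      rw [hc] at he
      exact ⟨e, by rw [hcast]; push_cast; linarith⟩
  exact ⟨⟨Fin n, Fin 2, inferInstance, inferInstance, ω,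
    fun b => List.ofFn (g b), hnodup⟩, part1, part2⟩
end

section
/- For every finite simple graph H there exists a routed network of conflict depth at most two whose routes are indexed by the edges of H, such that for every integer c ≥ 1 the network admits a (c,1)-periodic assignment if and only if H admits a proper edge coloring with c colors (adjacent edges receive distinct colors). -/
/-- The arcs of route `a` that also belong to some other route. -/
def sharedArcs {V ι : Type*} (routes : ι → List V) (a : ι) : Set (V × V) :=
  {p | p ∈ arcs (routes a) ∧ ∃ b : ι, b ≠ a ∧ p ∈ arcs (routes b)}

lemma latency_zero {V : Type*} (r : List V) (i : ℕ) :
    latency (fun _ _ => 0) r i = 0 := by simp [latency]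

lemma slotSet_one (c : ℕ) (t : ℤ) : slotSet c 1 t = {((t : ℤ) : ZMod c)} := by
  ext s
  constructor
  · rintro ⟨k, hk, rfl⟩
    interval_cases k
    simp
  · rintro rfl
    exact ⟨0, one_pos, by simp⟩

/-- For every finite simple graph `H` there is a routed network of conflict depth
at most two, with routes indexed by the edges of `H`, which admits a
`(c,1)`-periodic assignment exactly when `H` admits a proper edge coloring with
`c` colors. -/
theorem edge_coloring_reduction {W : Type*} [Fintype W] [DecidableEq W]
    (H : SimpleGraph W) [DecidableRel H.Adj] :
    ∃ (V : Type) (_ : Fintype V) (routes : H.edgeSet → List V) (ω : V → V → ℕ),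
      (∀ e : H.edgeSet, (routes e).Nodup) ∧
      (∀ e : H.edgeSet, (sharedArcs routes e).ncard ≤ 2) ∧
      (∀ c : ℕ, 1 ≤ c →
        ((∃ m : H.edgeSet → ℤ, IsPeriodicAssignment ω routes c 1 m) ↔
         (∃ f : H.edgeSet → Fin c, ∀ e₁ e₂ : H.edgeSet, e₁ ≠ e₂ →
            (∃ v : W, v ∈ (e₁ : Sym2 W) ∧ v ∈ (e₂ : Sym2 W)) → f e₁ ≠ f e₂))) := by
  classical
  set n := Fintype.card W with hn
  set σ : W ≃ Fin n := Fintype.equivFin W with hσ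
  have hex : ∀ e : H.edgeSet, ∃ u v : W, (e : Sym2 W) = s(u, v) ∧ u ≠ v := by
    rintro ⟨s, hs⟩
    induction s using Sym2.ind with
    | _ u v => exact ⟨u, v, rfl, (H.mem_edgeSet.mp hs).ne⟩
  choose q1 q2 hq hqne using hex
  set routes : H.edgeSet → List (Fin n × Bool) := fun e =>
    [(σ (q1 e), false), (σ (q1 e), true), (σ (q2 e), false), (σ (q2 e), true)]
    with hroutes
  refine ⟨Fin n × Bool, inferInstance, routes, fun _ _ => 0, ?_, ?_, ?_⟩
  · intro e
    have h12 : σ (q1 e) ≠ σ (q2 e) := fun h => hqne e (σ.injective h)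
    simp [hroutes, List.nodup_cons, Prod.ext_iff, h12, h12.symm]
  · -- sharedArcs bound
    intro e
    have hsub : sharedArcs routes e ⊆
        {((σ (q1 e), false), (σ (q1 e), true)), ((σ (q2 e), false), (σ (q2 e), true))} := by
      rintro p ⟨hpa, b, hb, hpb⟩
      have hpa' : p = ((σ (q1 e), false), (σ (q1 e), true)) ∨
          p = ((σ (q1 e), true), (σ (q2 e), false)) ∨
          p = ((σ (q2 e), false), (σ (q2 e), true)) := by
        simpa [hroutes, arcs] using hpa
      rcases hpa' with h | h | h
      · exact Or.inl h
      · -- middle arc: forces b = e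
        exfalso
        have hpb' : p = ((σ (q1 b), false), (σ (q1 b), true)) ∨
            p = ((σ (q1 b), true), (σ (q2 b), false)) ∨
            p = ((σ (q2 b), false), (σ (q2 b), true)) := by
          simpa [hroutes, arcs] using hpb
        subst h
        rcases hpb' with h | h | h
        · simp [Prod.ext_iff] at h
        · simp only [Prod.ext_iff, Prod.mk.injEq] at h
          have h1 : q1 b = q1 e := σ.injective h.1.1.symm
          have h2 : q2 b = q2 e := σ.injective h.2.1.symm
          apply hb
          apply Subtype.ext
          rw [hq b, hq e, h1, h2]
        · simp [Prod.ext_iff] at h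
      · exact Or.inr h
    calc (sharedArcs routes e).ncard ≤ _ := Set.ncard_le_ncard hsub ((Set.finite_singleton _).insert _)
      _ ≤ 2 := by
          refine le_trans (Set.ncard_insert_le _ _) ?_
          simp
  · intro c hc
    haveI : NeZero c := ⟨by omega⟩
    have hlen : ∀ e, (routes e).length = 4 := fun e => rfl
    constructor
    · rintro ⟨m, hm⟩
      refine ⟨fun e => ⟨((m e : ZMod c)).val, ZMod.val_lt _⟩, ?_⟩
      rintro a b hab ⟨v, hva, hvb⟩ hfeq
      have hmeq : ((m a : ℤ) : ZMod c) = ((m b : ℤ) : ZMod c) := by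
        apply ZMod.val_injective
        exact congrArg Fin.val hfeq
      apply hm a b hab
      have hva' : v = q1 a ∨ v = q2 a := by
        rw [hq a] at hva; simpa using hva
      have hvb' : v = q1 b ∨ v = q2 b := by
        rw [hq b] at hvb; simpa using hvb
      set i : ℕ := if v = q1 a then 0 else 2 with hi
      set j : ℕ := if v = q1 b then 0 else 2 with hj
      have hgi : (routes a)[i]? = some (σ v, false) ∧
          (routes a)[i + 1]? = some (σ v, true) := by
        rcases hva' with h | h
        · simp [hi, h, hroutes]
        · by_cases h' : v = q1 a <;> simp [hi, h', hroutes, ← h]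
      have hgj : (routes b)[j]? = some (σ v, false) ∧
          (routes b)[j + 1]? = some (σ v, true) := by
        rcases hvb' with h | h
        · simp [hj, h, hroutes]
        · by_cases h' : v = q1 b <;> simp [hj, h', hroutes, ← h]
      refine ⟨i, j, ?_, ?_, hgi.1.trans hgj.1.symm, hgi.2.trans hgj.2.symm, ?_⟩
      · rw [hlen]; rcases hva' with h | h <;> by_cases h' : v = q1 a <;> simp [hi, h']
      · rw [hlen]; rcases hvb' with h | h <;> by_cases h' : v = q1 b <;> simp [hj, h']
      · refine ⟨((m a : ℤ) : ZMod c), ?_, ?_⟩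
        · rw [latency_zero, slotSet_one]; simp
        · rw [latency_zero, slotSet_one]; simp [hmeq]
    · rintro ⟨f, hf⟩
      refine ⟨fun e => ((f e : ℕ) : ℤ), ?_⟩
      rintro a b hab ⟨i, j, hi, hj, h1, h2, ⟨x, hx1, hx2⟩⟩
      rw [latency_zero, slotSet_one] at hx1 hx2
      simp only [Set.mem_singleton_iff] at hx1 hx2
      have hmeq : ((f a : ℕ) : ZMod c) = ((f b : ℕ) : ZMod c) := by
        have h := hx1.symm.trans hx2
        push_cast at h
        simpa using h
      have hfeq : f a = f b := by
        apply Fin.ext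
        have : ((f a : ℕ) : ZMod c) = ((f b : ℕ) : ZMod c) := hmeq
        calc (f a : ℕ) = ((f a : ℕ) : ZMod c).val := (ZMod.val_cast_of_lt (f a).isLt).symm
          _ = ((f b : ℕ) : ZMod c).val := by rw [this]
          _ = (f b : ℕ) := ZMod.val_cast_of_lt (f b).isLt
      rw [hlen] at hi hj
      have hi3 : i < 3 := by omega
      have hj3 : j < 3 := by omega
      -- derive common vertex or a = b
      have : ∃ v : W, v ∈ (a : Sym2 W) ∧ v ∈ (b : Sym2 W) := by
        have hma : ∀ w, w ∈ (a : Sym2 W) ↔ w = q1 a ∨ w = q2 a := by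
          intro w; rw [hq a]; simp
        have hmb : ∀ w, w ∈ (b : Sym2 W) ↔ w = q1 b ∨ w = q2 b := by
          intro w; rw [hq b]; simp
        interval_cases i <;> interval_cases j <;>
          simp only [hroutes, List.getElem?_cons_succ, List.getElem?_cons_zero, Option.some.injEq, Prod.mk.injEq] at h1 h2
        · exact ⟨q1 a, (hma _).mpr (Or.inl rfl),
            (hmb _).mpr (Or.inl (σ.injective h1.1))⟩
        · simp at h1
        · exact ⟨q1 a, (hma _).mpr (Or.inl rfl),
            (hmb _).mpr (Or.inr (σ.injective h1.1))⟩
        · simp at h1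
        · -- i = 1, j = 1 : same edge, contradiction
          exfalso
          apply hab
          apply Subtype.ext
          rw [hq a, hq b, σ.injective h1.1, σ.injective h2.1]
        · simp at h1
        · exact ⟨q2 a, (hma _).mpr (Or.inr rfl),
            (hmb _).mpr (Or.inl (σ.injective h1.1))⟩
        · simp at h1
        · exact ⟨q2 a, (hma _).mpr (Or.inr rfl),
            (hmb _).mpr (Or.inr (σ.injective h1.1))⟩
      exact hf a b hab this hfeq
end

section
/- In the unnormalized star model, the instance with weights (ωs, c, ωt, ωt') and deadlines d admits a valid assignment if and only if the instance with weights (0, 0, ωt, ωt') and deadlines d' given by d' i = d i − 2·c − 2·ωs i admits one; indeed (m, w) ↦ (i ↦ m i + ωs i, w) is a bijection between the valid assignments of the two instances. -/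
/-- Validity in the unnormalized star model with weights `(ωs, c, ωt, ωt')` and
deadlines `d`: the forward slot sets are pairwise disjoint, the backward slot
sets are pairwise disjoint, and each process time is at most the deadline. -/
def ValidStar (n P τ : ℕ) (ωs : Fin n → ℕ) (c : ℕ) (ωt ωt' : Fin n → ℕ)
    (d : Fin n → ℤ) (m : Fin n → ℤ) (w : Fin n → ℕ) : Prop :=
  (∀ i j : Fin n, i ≠ j →
      Disjoint (slotSet P τ (m i + (ωs i : ℤ)))
               (slotSet P τ (m j + (ωs j : ℤ)))) ∧
  (∀ i j : Fin n, i ≠ j →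
      Disjoint (slotSet P τ (m i + (ωs i : ℤ) + (c : ℤ) + (ωt i : ℤ) + (w i : ℤ) + (ωt' i : ℤ)))
               (slotSet P τ (m j + (ωs j : ℤ) + (c : ℤ) + (ωt j : ℤ) + (w j : ℤ) + (ωt' j : ℤ)))) ∧
  (∀ i : Fin n,
      2 * (ωs i : ℤ) + 2 * (c : ℤ) + (ωt i : ℤ) + (ωt' i : ℤ) + (w i : ℤ) ≤ d i)


lemma slotSet_add (P τ : ℕ) (t a : ℤ) :
    slotSet P τ (t + a) = (fun x => x + (a : ZMod P)) '' slotSet P τ t := by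
  ext s
  constructor
  · rintro ⟨k, hk, rfl⟩
    exact ⟨((t + k : ℤ) : ZMod P), ⟨k, hk, rfl⟩, by push_cast; ring⟩
  · rintro ⟨x, ⟨k, hk, rfl⟩, rfl⟩
    exact ⟨k, hk, by push_cast; ring⟩

lemma disjoint_slotSet_add (P τ : ℕ) (t s a : ℤ) :
    Disjoint (slotSet P τ (t + a)) (slotSet P τ (s + a)) ↔
    Disjoint (slotSet P τ t) (slotSet P τ s) := by
  rw [slotSet_add, slotSet_add,
    Set.disjoint_image_iff (add_left_injective (a : ZMod P))]

/-- Normalization of source and central weights: the instance with weights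
`(ωs, c, ωt, ωt')` and deadlines `d` is equivalent to the instance with weights
`(0, 0, ωt, ωt')` and deadlines `d' i = d i - 2c - 2 ωs i`, via the bijection
`(m, w) ↦ (fun i => m i + ωs i, w)` on valid assignments. -/
theorem star_source_central_normalization (n P τ : ℕ) (hn : 1 ≤ n) (hP : 1 ≤ P)
    (hτ : 1 ≤ τ) (ωs : Fin n → ℕ) (c : ℕ) (ωt ωt' : Fin n → ℕ) (d : Fin n → ℤ) :
    (∀ (m : Fin n → ℤ) (w : Fin n → ℕ),
        ValidStar n P τ ωs c ωt ωt' d m w ↔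
        ValidStar n P τ (fun _ => 0) 0 ωt ωt'
          (fun i => d i - 2 * (c : ℤ) - 2 * (ωs i : ℤ))
          (fun i => m i + (ωs i : ℤ)) w) ∧
    ((∃ (m : Fin n → ℤ) (w : Fin n → ℕ), ValidStar n P τ ωs c ωt ωt' d m w) ↔
     (∃ (m : Fin n → ℤ) (w : Fin n → ℕ),
        ValidStar n P τ (fun _ => 0) 0 ωt ωt'
          (fun i => d i - 2 * (c : ℤ) - 2 * (ωs i : ℤ)) m w)) := by
  have key : ∀ (m : Fin n → ℤ) (w : Fin n → ℕ),
      ValidStar n P τ ωs c ωt ωt' d m w ↔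
      ValidStar n P τ (fun _ => 0) 0 ωt ωt'
        (fun i => d i - 2 * (c : ℤ) - 2 * (ωs i : ℤ))
        (fun i => m i + (ωs i : ℤ)) w := by
    intro m w
    unfold ValidStar
    constructor
    · rintro ⟨h1, h2, h3⟩
      refine ⟨?_, ?_, ?_⟩
      · intro i j hij
        have := h1 i j hij
        simpa using this
      · intro i j hij
        have := h2 i j hij
        rw [show m i + (ωs i : ℤ) + (c : ℤ) + (ωt i : ℤ) + (w i : ℤ) + (ωt' i : ℤ)
              = (m i + (ωs i : ℤ) + (ωt i : ℤ) + (w i : ℤ) + (ωt' i : ℤ)) + (c : ℤ) by ring,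
           show m j + (ωs j : ℤ) + (c : ℤ) + (ωt j : ℤ) + (w j : ℤ) + (ωt' j : ℤ)
              = (m j + (ωs j : ℤ) + (ωt j : ℤ) + (w j : ℤ) + (ωt' j : ℤ)) + (c : ℤ) by ring,
           disjoint_slotSet_add] at this
        simp only [Nat.cast_zero]
        convert this using 2 <;> ring
      · intro i
        have := h3 i
        simp only [Nat.cast_zero]
        linarith
    · rintro ⟨h1, h2, h3⟩
      refine ⟨?_, ?_, ?_⟩
      · intro i j hij
        have := h1 i j hij
        simpa using this
      · intro i j hij
        have := h2 i j hij
        rw [show m i + (ωs i : ℤ) + (c : ℤ) + (ωt i : ℤ) + (w i : ℤ) + (ωt' i : ℤ)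
              = (m i + (ωs i : ℤ) + (ωt i : ℤ) + (w i : ℤ) + (ωt' i : ℤ)) + (c : ℤ) by ring,
           show m j + (ωs j : ℤ) + (c : ℤ) + (ωt j : ℤ) + (w j : ℤ) + (ωt' j : ℤ)
              = (m j + (ωs j : ℤ) + (ωt j : ℤ) + (w j : ℤ) + (ωt' j : ℤ)) + (c : ℤ) by ring,
           disjoint_slotSet_add]
        simp only [Nat.cast_zero] at this
        convert this using 2 <;> ring
      · intro i
        have := h3 i
        simp only [Nat.cast_zero] at this
        linarith
  refine ⟨key, ?_⟩
  constructor
  · rintro ⟨m, w, h⟩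
    exact ⟨fun i => m i + (ωs i : ℤ), w, (key m w).mp h⟩
  · rintro ⟨m, w, h⟩
    refine ⟨fun i => m i - (ωs i : ℤ), w, (key _ w).mpr ?_⟩
    convert h using 2 with i
    ring
end

section
/- In the unnormalized star model, let a, b : Fin n → ℕ satisfy a i ≤ ωt i, b i ≤ ωt' i, and a i + b i ≡ 0 (mod P) for all i. Then a pair (m, w) is a valid assignment of the instance with weights (ωs, c, ωt, ωt') and deadlines d if and only if it is a valid assignment of the instance with weights (ωs, c, ωt − a, ωt' − b) and deadlines d' given by d' i = d i − (a i + b i). In particular one may always reduce to an instance in which ωt i + ωt' i < P for every i. -/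
lemma slotSet_congr (P τ : ℕ) {t t' : ℤ} (h : ((t : ZMod P)) = (t' : ZMod P)) :
    slotSet P τ t = slotSet P τ t' := by
  ext s
  simp only [slotSet, Set.mem_setOf_eq]
  constructor <;> rintro ⟨k, hk, rfl⟩ <;> exact ⟨k, hk, by push_cast [h]; rfl⟩

/-- Normalization of target weights: subtracting `a i` from `ωt i` and `b i`
from `ωt' i`, where `a i + b i ≡ 0 (mod P)`, and `a i + b i` from the deadline,
preserves the valid assignments. In particular one can always reduce to an
instance where `ωt i + ωt' i < P` for every `i`. -/
theorem star_target_normalization (n P τ : ℕ) (hn : 1 ≤ n) (hP : 1 ≤ P)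
    (hτ : 1 ≤ τ) (ωs : Fin n → ℕ) (c : ℕ) (ωt ωt' : Fin n → ℕ) (d : Fin n → ℤ)
    (a b : Fin n → ℕ) (ha : ∀ i, a i ≤ ωt i) (hb : ∀ i, b i ≤ ωt' i)
    (hab : ∀ i, (P : ℕ) ∣ (a i + b i)) :
    (∀ (m : Fin n → ℤ) (w : Fin n → ℕ),
        ValidStar n P τ ωs c ωt ωt' d m w ↔
        ValidStar n P τ ωs c (fun i => ωt i - a i) (fun i => ωt' i - b i)
          (fun i => d i - ((a i : ℤ) + (b i : ℤ))) m w) ∧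
    (∃ a' b' : Fin n → ℕ, ∀ i : Fin n,
        a' i ≤ ωt i ∧ b' i ≤ ωt' i ∧ (P : ℕ) ∣ (a' i + b' i) ∧
        (ωt i - a' i) + (ωt' i - b' i) < P) := by
  constructor
  · intro m w
    have hcast : ∀ i : Fin n, ((ωt i - a i : ℕ) : ℤ) = (ωt i : ℤ) - a i := by
      intro i; exact_mod_cast Int.ofNat_sub (ha i)
    have hcast' : ∀ i : Fin n, ((ωt' i - b i : ℕ) : ℤ) = (ωt' i : ℤ) - b i := by
      intro i; exact_mod_cast Int.ofNat_sub (hb i)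
    have key : ∀ i : Fin n,
        slotSet P τ (m i + (ωs i : ℤ) + (c : ℤ) + ((ωt i - a i : ℕ) : ℤ) + (w i : ℤ)
            + ((ωt' i - b i : ℕ) : ℤ))
        = slotSet P τ (m i + (ωs i : ℤ) + (c : ℤ) + (ωt i : ℤ) + (w i : ℤ) + (ωt' i : ℤ)) := by
      intro i
      apply slotSet_congr
      have h0 : ((a i + b i : ℕ) : ZMod P) = 0 :=
        (ZMod.natCast_eq_zero_iff _ _).mpr (hab i)
      rw [hcast i, hcast' i]
      push_cast at h0 ⊢
      linear_combination -h0
    simp only [ValidStar, key]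
    constructor <;> rintro ⟨h1, h2, h3⟩ <;>
      refine ⟨h1, h2, fun i => ?_⟩ <;> have := h3 i <;>
      simp only [hcast, hcast'] at * <;> linarith
  · refine ⟨fun i => min (ωt i) ((ωt i + ωt' i) - (ωt i + ωt' i) % P),
      fun i => ((ωt i + ωt' i) - (ωt i + ωt' i) % P)
        - min (ωt i) ((ωt i + ωt' i) - (ωt i + ωt' i) % P), fun i => ?_⟩
    dsimp only
    set s := ωt i + ωt' i with hs
    have hmod : s % P < P := Nat.mod_lt _ hP
    have hle : s % P ≤ s := Nat.mod_le _ _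
    have hdm := Nat.div_add_mod s P
    have hsum : min (ωt i) (s - s % P)
        + ((s - s % P) - min (ωt i) (s - s % P)) = s - s % P := by omega
    refine ⟨min_le_left _ _, by omega, ?_, by omega⟩
    rw [hsum]
    exact ⟨s / P, by omega⟩
end

section
/- Shortest-Longest correctness: in the star model with zero waiting, assume the latencies are nondecreasing (i ≤ j implies λ i ≤ λ j) and n·τ + 2·(λ (n−1) − λ 0) ≤ P. Then the assignment m i = i·τ is valid: the forward slot sets F_i are pairwise disjoint and the backward slot sets B_i are pairwise disjoint. -/
/-- Forward slot set of route `i` in the star model with zero waiting. -/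
def fwdSlots (n P τ : ℕ) (m : Fin n → ℤ) (i : Fin n) : Set (ZMod P) :=
  slotSet P τ (m i)

/-- Backward slot set of route `i` in the star model with zero waiting. -/
def bwdSlots (n P τ : ℕ) (lam : Fin n → ℕ) (m : Fin n → ℤ) (i : Fin n) : Set (ZMod P) :=
  slotSet P τ (m i + 2 * (lam i : ℤ))

/-- Validity in the star model with zero waiting: the forward slot sets are
pairwise disjoint and the backward slot sets are pairwise disjoint. -/
def ValidZW (n P τ : ℕ) (lam : Fin n → ℕ) (m : Fin n → ℤ) : Prop :=
  ∀ i j : Fin n, i ≠ j →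
    Disjoint (fwdSlots n P τ m i) (fwdSlots n P τ m j) ∧
    Disjoint (bwdSlots n P τ lam m i) (bwdSlots n P τ lam m j)

lemma slotSet_disjoint (P τ : ℕ) (s t : ℤ) (h1 : s + τ ≤ t) (h2 : t + τ ≤ s + P) :
    Disjoint (slotSet P τ s) (slotSet P τ t) := by
  rw [Set.disjoint_left]
  rintro x ⟨k, hk, rfl⟩ ⟨k', hk', he⟩
  have hd : (P : ℤ) ∣ (t + k') - (s + k) :=
    ((ZMod.intCast_eq_intCast_iff _ _ _).mp he).dvd
  have h0 : (t + k') - (s + k) = 0 :=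
    Int.eq_zero_of_abs_lt_dvd hd (by rw [abs_of_pos] <;> omega)
  omega

/-- Shortest-Longest correctness: if the latencies are nondecreasing and
`n·τ + 2·(λ(n-1) - λ(0)) ≤ P`, then the assignment `m i = i·τ` is valid. -/
theorem shortest_longest_correct (n P τ : ℕ) (hn : 1 ≤ n) (hP : 1 ≤ P)
    (hτ : 1 ≤ τ) (lam : Fin n → ℕ)
    (hmono : ∀ i j : Fin n, i ≤ j → lam i ≤ lam j)
    (hbound : n * τ + 2 * (lam ⟨n - 1, by omega⟩ - lam ⟨0, by omega⟩) ≤ P) :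
    ValidZW n P τ lam (fun i => ((i : ℕ) * τ : ℤ)) := by
  have key : ∀ i j : Fin n, (i : ℕ) < (j : ℕ) →
      Disjoint (fwdSlots n P τ (fun i => ((i : ℕ) * τ : ℤ)) i)
        (fwdSlots n P τ (fun i => ((i : ℕ) * τ : ℤ)) j) ∧
      Disjoint (bwdSlots n P τ lam (fun i => ((i : ℕ) * τ : ℤ)) i)
        (bwdSlots n P τ lam (fun i => ((i : ℕ) * τ : ℤ)) j) := by
    intro i j hij
    have hjn : (j : ℕ) ≤ n - 1 := by omega
    have hli : lam ⟨0, by omega⟩ ≤ lam i := hmono _ _ (by simp only [Fin.le_def, Fin.val_mk]; omega)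
    have hlj : lam j ≤ lam ⟨n - 1, by omega⟩ := hmono _ _ (by simp only [Fin.le_def, Fin.val_mk]; exact hjn)
    have hlij : lam i ≤ lam j := hmono i j (by simp only [Fin.le_def, Fin.val_mk]; omega)
    have h0n : lam ⟨0, by omega⟩ ≤ lam ⟨n - 1, by omega⟩ :=
      hmono _ _ (by simp only [Fin.le_def, Fin.val_mk]; omega)
    have hτij : ((i : ℕ) : ℤ) * τ + τ ≤ ((j : ℕ) : ℤ) * τ := by
      have : (((i : ℕ) : ℤ) + 1) * τ ≤ ((j : ℕ) : ℤ) * τ := by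
        apply mul_le_mul_of_nonneg_right _ (by positivity)
        have : ((i : ℕ) : ℤ) + 1 ≤ ((j : ℕ) : ℤ) := by exact_mod_cast hij
        exact this
      linarith
    have hjP : ((j : ℕ) : ℤ) * τ + τ ≤ (n : ℤ) * τ := by
      have : (((j : ℕ) : ℤ) + 1) * τ ≤ (n : ℤ) * τ := by
        apply mul_le_mul_of_nonneg_right _ (by positivity)
        have : ((j : ℕ) : ℤ) + 1 ≤ (n : ℤ) := by exact_mod_cast j.isLt
        exact this
      linarith
    have hiτ : (0 : ℤ) ≤ ((i : ℕ) : ℤ) * τ := by positivity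
    have hnτP : (n : ℤ) * τ + 2 * ((lam ⟨n - 1, by omega⟩ : ℤ) - (lam ⟨0, by omega⟩ : ℤ))
        ≤ P := by
      have hb := hbound
      zify [h0n] at hb
      linarith
    have hli' : ((lam ⟨0, by omega⟩ : ℕ) : ℤ) ≤ (lam i : ℤ) := by exact_mod_cast hli
    have hlj' : ((lam j : ℕ) : ℤ) ≤ (lam ⟨n - 1, by omega⟩ : ℤ) := by exact_mod_cast hlj
    have hlij' : ((lam i : ℕ) : ℤ) ≤ (lam j : ℤ) := by exact_mod_cast hlij
    have h0n' : ((lam ⟨0, by omega⟩ : ℕ) : ℤ) ≤ (lam ⟨n - 1, by omega⟩ : ℤ) := by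
      exact_mod_cast h0n
    refine ⟨slotSet_disjoint P τ _ _ ?_ ?_, slotSet_disjoint P τ _ _ ?_ ?_⟩
    · show ((i : ℕ) : ℤ) * τ + τ ≤ ((j : ℕ) : ℤ) * τ
      exact hτij
    · show ((j : ℕ) : ℤ) * τ + τ ≤ ((i : ℕ) : ℤ) * τ + P
      linarith
    · show ((i : ℕ) : ℤ) * τ + 2 * (lam i : ℤ) + τ ≤ ((j : ℕ) : ℤ) * τ + 2 * (lam j : ℤ)
      linarith
    · show ((j : ℕ) : ℤ) * τ + 2 * (lam j : ℤ) + τ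
        ≤ ((i : ℕ) : ℤ) * τ + 2 * (lam i : ℤ) + P
      linarith
  intro i j hij
  rcases lt_or_gt_of_ne (fun h : (i : ℕ) = (j : ℕ) => hij (Fin.ext h)) with h | h
  · exact key i j h
  · exact ⟨(key j i h).1.symm, (key j i h).2.symm⟩
end

section
/- Greedy feasibility at load one third: in the star model with zero waiting, if 3·n·τ ≤ P then for every choice of latencies λ : Fin n → ℕ there exists a valid assignment m : Fin n → ℤ (the forward slot sets are pairwise disjoint and the backward slot sets are pairwise disjoint). -/
/-- `d` has cyclic distance at least `τ` from `0` modulo `P`. -/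
def SymGap (P τ : ℕ) (d : ℤ) : Prop :=
  (τ : ℤ) ≤ d % (P : ℤ) ∧ d % (P : ℤ) ≤ (P : ℤ) - τ

lemma emod_two_cases (P : ℕ) (hP : 0 < P) (x : ℤ) (h0 : 0 ≤ x) (h2 : x < 2 * (P : ℤ)) :
    x % (P : ℤ) = x ∨ x % (P : ℤ) = x - P := by
  rcases lt_or_ge x (P : ℤ) with h | h
  · exact Or.inl (Int.emod_eq_of_lt h0 h)
  · right
    have h3 : x % (P : ℤ) = (x - P) % (P : ℤ) := by
      conv_lhs => rw [show x = (x - (P : ℤ)) + (P : ℤ) * 1 by ring]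
      rw [Int.add_mul_emod_self_left]
    rw [h3, Int.emod_eq_of_lt (by omega) (by omega)]

lemma neg_emod_eq (P : ℕ) (hP : 0 < P) (d : ℤ) (h : d % (P : ℤ) ≠ 0) :
    (-d) % (P : ℤ) = (P : ℤ) - d % (P : ℤ) := by
  have hq := Int.mul_ediv_add_emod d (P : ℤ)
  have h0 : 0 ≤ d % (P : ℤ) := Int.emod_nonneg d (by exact_mod_cast hP.ne')
  have h1 : d % (P : ℤ) < P := Int.emod_lt_of_pos d (by exact_mod_cast hP)
  have h2 : -d = ((P : ℤ) - d % (P : ℤ)) + (P : ℤ) * (-(d / (P : ℤ)) - 1) := by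
    linear_combination hq
  rw [h2, Int.add_mul_emod_self_left, Int.emod_eq_of_lt (by omega) (by omega)]

lemma symPos (P τ : ℕ) (hτ : 1 ≤ τ) (d : ℤ) (h1 : (τ : ℤ) ≤ d) (h2 : d ≤ (P : ℤ) - τ) :
    SymGap P τ d := by
  have h3 : d % (P : ℤ) = d := Int.emod_eq_of_lt (by omega) (by omega)
  unfold SymGap
  rw [h3]
  exact ⟨h1, h2⟩

lemma symNeg (P τ : ℕ) (hP : 0 < P) (hτ : 1 ≤ τ) (d : ℤ) (h : SymGap P τ d) :
    SymGap P τ (-d) := by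
  obtain ⟨h1, h2⟩ := h
  obtain ⟨r, hr⟩ : ∃ r, d % (P : ℤ) = r := ⟨_, rfl⟩
  rw [hr] at h1 h2
  have hτ' : (1 : ℤ) ≤ τ := by exact_mod_cast hτ
  have hne : d % (P : ℤ) ≠ 0 := by rw [hr]; omega
  have h3 := neg_emod_eq P hP d hne
  rw [hr] at h3
  unfold SymGap
  rw [h3]
  exact ⟨by omega, by omega⟩

lemma disj_of_sym (P τ : ℕ) (hP : 0 < P) (hτ : 1 ≤ τ) (a b : ℤ) (h : SymGap P τ (a - b)) :
    Disjoint (slotSet P τ a) (slotSet P τ b) := by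
  obtain ⟨h1, h2⟩ := h
  have hττ : (τ : ℤ) ≤ (P : ℤ) - τ := le_trans h1 h2
  rw [Set.disjoint_left]
  rintro s ⟨k, hk, rfl⟩ ⟨l, hl, hs⟩
  have hmod : (a + k) ≡ (b + l) [ZMOD (P : ℤ)] := by
    rwa [ZMod.intCast_eq_intCast_iff] at hs
  have hmod2 : (a - b) ≡ ((l : ℤ) - k) [ZMOD (P : ℤ)] := by
    calc a - b = (a + k) - (b + k) := by ring
      _ ≡ (b + l) - (b + k) [ZMOD (P : ℤ)] := hmod.sub_right _
      _ = (l : ℤ) - k := by ring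
  have hmod3 : (a - b) % (P : ℤ) = ((l : ℤ) - k) % (P : ℤ) := hmod2
  have hkτ : (k : ℤ) < τ := by exact_mod_cast hk
  have hlτ : (l : ℤ) < τ := by exact_mod_cast hl
  rcases le_or_gt (k : ℤ) (l : ℤ) with hkl | hkl
  · have h4 : ((l : ℤ) - k) % (P : ℤ) = (l : ℤ) - k :=
      Int.emod_eq_of_lt (by omega) (by omega)
    rw [h4] at hmod3
    rw [hmod3] at h1
    omega
  · have h5 : ((k : ℤ) - l) % (P : ℤ) = (k : ℤ) - l :=
      Int.emod_eq_of_lt (by omega) (by omega)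
    have h6 := neg_emod_eq P hP ((k : ℤ) - l) (by rw [h5]; omega)
    rw [h5] at h6
    have h7 : ((l : ℤ) - k) % (P : ℤ) = (P : ℤ) - ((k : ℤ) - l) := by
      rw [show (l : ℤ) - k = -((k : ℤ) - l) by ring, h6]
    rw [h7] at hmod3
    rw [hmod3] at h2
    omega

lemma three_bad (P τ K : ℕ) (hτ : 1 ≤ τ) (hK : τ * K ≤ P) (c : ℤ) (u v w : ℕ)
    (huv : u < v) (hvw : v < w) (hwK : w < K)
    (hu : ¬ SymGap P τ ((τ : ℤ) * u + c)) (hv : ¬ SymGap P τ ((τ : ℤ) * v + c))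
    (hw : ¬ SymGap P τ ((τ : ℤ) * w + c)) : False := by
  have hP : 0 < P := by
    have h3 : 3 ≤ K := by omega
    have h4 : 3 ≤ τ * K := le_trans (by simpa using Nat.mul_le_mul hτ h3) le_rfl
    omega
  have hPZ : (0 : ℤ) < P := by exact_mod_cast hP
  have hPne : (P : ℤ) ≠ 0 := hPZ.ne'
  have hτ0 : (0 : ℤ) ≤ τ := by positivity
  have hτ1 : (1 : ℤ) ≤ τ := by exact_mod_cast hτ
  have hKP : (τ : ℤ) * K ≤ P := by exact_mod_cast hK
  obtain ⟨e2, he2⟩ : ∃ e : ℤ, (τ : ℤ) * ((v : ℤ) - u) = e := ⟨_, rfl⟩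
  obtain ⟨e3, he3⟩ : ∃ e : ℤ, (τ : ℤ) * ((w : ℤ) - u) = e := ⟨_, rfl⟩
  have h2l : (τ : ℤ) ≤ e2 := by
    have h := mul_le_mul_of_nonneg_left (show (1 : ℤ) ≤ (v : ℤ) - u by omega) hτ0
    rw [he2] at h; linarith
  have h23 : e2 + τ ≤ e3 := by
    have h := mul_le_mul_of_nonneg_left
      (show ((v : ℤ) - u) + 1 ≤ (w : ℤ) - u by omega) hτ0
    rw [mul_add] at h
    rw [he2, he3] at h; linarith
  have h3P : e3 ≤ (P : ℤ) - τ := by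
    have h := mul_le_mul_of_nonneg_left (show (w : ℤ) - u ≤ (K : ℤ) - 1 by omega) hτ0
    rw [he3] at h
    have h' : (τ : ℤ) * ((K : ℤ) - 1) = (τ : ℤ) * K - τ := by ring
    rw [h'] at h; linarith
  obtain ⟨ru, hruDef⟩ : ∃ r, ((τ : ℤ) * u + c) % (P : ℤ) = r := ⟨_, rfl⟩
  obtain ⟨rv, hrvDef⟩ : ∃ r, ((τ : ℤ) * v + c) % (P : ℤ) = r := ⟨_, rfl⟩
  obtain ⟨rw2, hrwDef⟩ : ∃ r, ((τ : ℤ) * w + c) % (P : ℤ) = r := ⟨_, rfl⟩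
  have hru0 : 0 ≤ ru := by rw [← hruDef]; exact Int.emod_nonneg _ hPne
  have hruP : ru < P := by rw [← hruDef]; exact Int.emod_lt_of_pos _ hPZ
  have hrv0 : 0 ≤ rv := by rw [← hrvDef]; exact Int.emod_nonneg _ hPne
  have hrvP : rv < P := by rw [← hrvDef]; exact Int.emod_lt_of_pos _ hPZ
  have hrw0 : 0 ≤ rw2 := by rw [← hrwDef]; exact Int.emod_nonneg _ hPne
  have hrwP : rw2 < P := by rw [← hrwDef]; exact Int.emod_lt_of_pos _ hPZ
  have he2P : e2 % (P : ℤ) = e2 := Int.emod_eq_of_lt (by omega) (by omega)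
  have he3P : e3 % (P : ℤ) = e3 := Int.emod_eq_of_lt (by omega) (by omega)
  have hv2 : rv = (ru + e2) % (P : ℤ) := by
    rw [← hrvDef, show (τ : ℤ) * v + c = ((τ : ℤ) * u + c) + e2 by rw [← he2]; ring,
      Int.add_emod, hruDef, he2P]
  have hw2 : rw2 = (ru + e3) % (P : ℤ) := by
    rw [← hrwDef, show (τ : ℤ) * w + c = ((τ : ℤ) * u + c) + e3 by rw [← he3]; ring,
      Int.add_emod, hruDef, he3P]
  have hvD : rv = ru + e2 ∨ rv = ru + e2 - P := by
    rcases emod_two_cases P hP (ru + e2) (by omega) (by omega) with h | h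
    · left; rw [hv2, h]
    · right; rw [hv2, h]
  have hwD : rw2 = ru + e3 ∨ rw2 = ru + e3 - P := by
    rcases emod_two_cases P hP (ru + e3) (by omega) (by omega) with h | h
    · left; rw [hw2, h]
    · right; rw [hw2, h]
  unfold SymGap at hu hv hw
  rw [hruDef] at hu
  rw [hrvDef] at hv
  rw [hrwDef] at hw
  omega

lemma three_bad' (P τ K : ℕ) (hτ : 1 ≤ τ) (hK : τ * K ≤ P) (c : ℤ) (u v w : ℕ)
    (h1 : u ≠ v) (h2 : u ≠ w) (h3 : v ≠ w) (huK : u < K) (hvK : v < K) (hwK : w < K)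
    (hu : ¬ SymGap P τ ((τ : ℤ) * u + c)) (hv : ¬ SymGap P τ ((τ : ℤ) * v + c))
    (hw : ¬ SymGap P τ ((τ : ℤ) * w + c)) : False := by
  have H : ∀ a b c' : ℕ, a < b → b < c' → c' < K →
      ¬ SymGap P τ ((τ : ℤ) * a + c) → ¬ SymGap P τ ((τ : ℤ) * b + c) →
      ¬ SymGap P τ ((τ : ℤ) * c' + c) → False :=
    fun a b c' hab hbc hcK => three_bad P τ K hτ hK c a b c' hab hbc hcK
  rcases Nat.lt_trichotomy u v with h | h | h
  · rcases Nat.lt_trichotomy v w with h' | h' | h'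
    · exact H u v w h h' hwK hu hv hw
    · exact absurd h' h3
    · rcases Nat.lt_trichotomy u w with h'' | h'' | h''
      · exact H u w v h'' h' hvK hu hw hv
      · exact absurd h'' h2
      · exact H w u v h'' h hvK hw hu hv
  · exact absurd h h1
  · rcases Nat.lt_trichotomy u w with h' | h' | h'
    · exact H v u w h h' hwK hv hu hw
    · exact absurd h' h2
    · rcases Nat.lt_trichotomy v w with h'' | h'' | h''
      · exact H v w u h'' h' huK hv hw hu
      · exact absurd h'' h3
      · exact H w v u h'' h huK hw hv hu

lemma two_bound (P τ K : ℕ) (hτ : 1 ≤ τ) (hK : τ * K ≤ P) (c : ℤ) :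
    ∃ b1 b2 : ℕ, ∀ v, v < K → ¬ SymGap P τ ((τ : ℤ) * v + c) → v = b1 ∨ v = b2 := by
  by_cases h1 : ∃ v, v < K ∧ ¬ SymGap P τ ((τ : ℤ) * v + c)
  · obtain ⟨v1, hv1K, hv1⟩ := h1
    by_cases h2 : ∃ v, v < K ∧ ¬ SymGap P τ ((τ : ℤ) * v + c) ∧ v ≠ v1
    · obtain ⟨v2, hv2K, hv2, hne⟩ := h2
      refine ⟨v1, v2, fun v hvK hv => ?_⟩
      by_contra hcon
      push_neg at hcon
      exact three_bad' P τ K hτ hK c v v1 v2 hcon.1 hcon.2 (Ne.symm hne)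
        hvK hv1K hv2K hv hv1 hv2
    · refine ⟨v1, v1, fun v hvK hv => ?_⟩
      by_contra hc
      push_neg at hc
      exact h2 ⟨v, hvK, hv, hc.1⟩
  · exact ⟨0, 0, fun v hvK hv => absurd ⟨v, hvK, hv⟩ h1⟩

lemma symFwd (P τ K : ℕ) (hτ : 1 ≤ τ) (hP : 0 < P) (hK : τ * K ≤ P) (a b : ℕ)
    (ha : a < K) (hb : b < K) (hne : a ≠ b) :
    SymGap P τ ((τ : ℤ) * a - (τ : ℤ) * b) := by
  have hτ0 : (0 : ℤ) ≤ τ := by positivity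
  have hKP : (τ : ℤ) * K ≤ P := by exact_mod_cast hK
  have key : ∀ a b : ℕ, a < K → b < a → SymGap P τ ((τ : ℤ) * a - (τ : ℤ) * b) := by
    intro a b haK hba
    apply symPos P τ hτ
    · have h := mul_le_mul_of_nonneg_left (show (1 : ℤ) ≤ (a : ℤ) - b by omega) hτ0
      rw [mul_sub] at h; linarith
    · have h := mul_le_mul_of_nonneg_left (show (a : ℤ) - b ≤ (K : ℤ) - 1 by omega) hτ0
      rw [mul_sub, mul_sub] at h; linarith
  rcases Nat.lt_or_ge b a with h | h
  · exact key a b ha h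
  · have hba : a < b := by omega
    have h1 := symNeg P τ hP hτ _ (key b a hb hba)
    rwa [neg_sub] at h1

/-- Greedy feasibility at load one third: if `3·n·τ ≤ P` then for every choice
of latencies there exists a valid assignment. -/
theorem greedy_feasibility_load_one_third (n P τ : ℕ) (hn : 1 ≤ n) (hP : 1 ≤ P)
    (hτ : 1 ≤ τ) (hload : 3 * n * τ ≤ P) (lam : Fin n → ℕ) :
    ∃ m : Fin n → ℤ, ValidZW n P τ lam m := by
  have hP0 : 0 < P := hP
  have hτ0 : 0 < τ := hτ
  obtain ⟨K, hKdef⟩ : ∃ K, K = P / τ := ⟨_, rfl⟩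
  have hKn : 3 * n ≤ K := by rw [hKdef]; exact (Nat.le_div_iff_mul_le hτ0).2 hload
  have hτK : τ * K ≤ P := by rw [hKdef, mul_comm]; exact Nat.div_mul_le_self P τ
  have hK0 : 0 < K := by omega
  have main : ∀ s : ℕ, s ≤ n → ∃ x : Fin n → ℕ, (∀ i, x i < K) ∧
      ∀ i j : Fin n, (i : ℕ) < s → (j : ℕ) < s → i ≠ j →
        SymGap P τ ((τ : ℤ) * (x i) - (τ : ℤ) * (x j)) ∧
        SymGap P τ (((τ : ℤ) * (x i) + 2 * (lam i : ℤ)) - ((τ : ℤ) * (x j) + 2 * (lam j : ℤ))) := by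
    intro s
    induction s with
    | zero => exact fun _ => ⟨fun _ => 0, fun _ => hK0, fun i j hi => absurd hi (Nat.not_lt_zero _)⟩
    | succ s ih =>
      intro hs1
      obtain ⟨x, hxK, hx⟩ := ih (by omega)
      have hsn : s < n := hs1
      obtain ⟨iS, hiS⟩ : ∃ iS : Fin n, iS = ⟨s, hsn⟩ := ⟨_, rfl⟩
      have hiSval : (iS : ℕ) = s := by rw [hiS]
      have hch := fun j : Fin n =>
        two_bound P τ K hτ hτK (2 * (lam iS : ℤ) - ((τ : ℤ) * (x j) + 2 * (lam j : ℤ)))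
      choose b1 b2 hb using hch
      obtain ⟨F, hF⟩ : ∃ F : Finset (Fin n), F = Finset.univ.filter (fun j : Fin n => (j : ℕ) < s) :=
        ⟨_, rfl⟩
      obtain ⟨bad, hbadDef⟩ : ∃ bad : Finset ℕ,
          bad = F.biUnion (fun j => {x j, b1 j, b2 j}) := ⟨_, rfl⟩
      have hFcard : F.card ≤ s := by
        have h := Finset.card_le_card_of_injOn (s := F) (t := Finset.range s) (fun j : Fin n => (j : ℕ))
          (fun j hj => Finset.mem_range.2 (by rw [hF] at hj; exact (Finset.mem_filter.1 hj).2))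
          (fun a _ b _ h => Fin.ext h)
        rwa [Finset.card_range] at h
      have hbadCard : bad.card ≤ 3 * s := by
        calc bad.card ≤ ∑ j ∈ F, ({x j, b1 j, b2 j} : Finset ℕ).card := by
              rw [hbadDef]; exact Finset.card_biUnion_le
          _ ≤ ∑ _j ∈ F, 3 := Finset.sum_le_sum (fun j _ => by
              have h1 := Finset.card_insert_le (x j) ({b1 j, b2 j} : Finset ℕ)
              have h2 := Finset.card_insert_le (b1 j) ({b2 j} : Finset ℕ)
              simp only [Finset.card_singleton] at h2
              omega)
          _ = 3 * F.card := by rw [Finset.sum_const, smul_eq_mul, mul_comm]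
          _ ≤ 3 * s := by omega
      obtain ⟨v, hvK, hvbad⟩ : ∃ v, v < K ∧ v ∉ bad := by
        have h1 : (Finset.range K \ bad).Nonempty := by
          rw [← Finset.card_pos]
          have h2 := Finset.le_card_sdiff bad (Finset.range K)
          rw [Finset.card_range] at h2
          omega
        obtain ⟨v, hv⟩ := h1
        rw [Finset.mem_sdiff, Finset.mem_range] at hv
        exact ⟨v, hv.1, hv.2⟩
      have hvj : ∀ j : Fin n, (j : ℕ) < s → v ≠ x j ∧ v ≠ b1 j ∧ v ≠ b2 j := by
        intro j hj
        have hjF : j ∈ F := by rw [hF]; exact Finset.mem_filter.2 ⟨Finset.mem_univ _, hj⟩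
        refine ⟨?_, ?_, ?_⟩ <;>
          intro h <;>
          exact hvbad (by rw [hbadDef]; exact Finset.mem_biUnion.2 ⟨j, hjF, by simp [h]⟩)
      refine ⟨Function.update x iS v, ?_, ?_⟩
      · intro i
        rcases eq_or_ne i iS with rfl | h
        · rw [Function.update_self]; exact hvK
        · rw [Function.update_of_ne h]; exact hxK i
      · have upd_eq : ∀ l : Fin n, (l : ℕ) < s → Function.update x iS v l = x l := by
          intro l hl
          apply Function.update_of_ne
          intro h
          rw [h, hiSval] at hl
          exact absurd hl (lt_irrefl s)
        have upd_S : Function.update x iS v iS = v := Function.update_self _ _ _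
        have hbwd : ∀ j : Fin n, (j : ℕ) < s →
            SymGap P τ (((τ : ℤ) * v + 2 * (lam iS : ℤ)) -
              ((τ : ℤ) * (x j) + 2 * (lam j : ℤ))) := by
          intro j hj
          obtain ⟨_, hb1, hb2⟩ := hvj j hj
          have heq : ((τ : ℤ) * v + 2 * (lam iS : ℤ)) - ((τ : ℤ) * (x j) + 2 * (lam j : ℤ))
              = (τ : ℤ) * v + (2 * (lam iS : ℤ) - ((τ : ℤ) * (x j) + 2 * (lam j : ℤ))) := by
            ring
          rw [heq]
          by_contra hcon
          rcases hb j v hvK hcon with h | h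
          · exact hb1 h
          · exact hb2 h
        intro i j hi hj hij
        rcases Nat.lt_or_ge (i : ℕ) s with his | his
        · rcases Nat.lt_or_ge (j : ℕ) s with hjs | hjs
          · rw [upd_eq i his, upd_eq j hjs]
            exact hx i j his hjs hij
          · have hjS : j = iS := Fin.ext (by omega)
            rw [hjS, upd_eq i his, upd_S]
            constructor
            · exact symFwd P τ K hτ hP0 hτK (x i) v (hxK i) hvK
                (fun h => (hvj i his).1 h.symm)
            · have h1 := symNeg P τ hP0 hτ _ (hbwd i his)
              have heq : ((τ : ℤ) * (x i) + 2 * (lam i : ℤ)) -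
                  ((τ : ℤ) * v + 2 * (lam iS : ℤ))
                  = -(((τ : ℤ) * v + 2 * (lam iS : ℤ)) -
                    ((τ : ℤ) * (x i) + 2 * (lam i : ℤ))) := by ring
              rw [heq]
              exact h1
        · have hiS' : i = iS := Fin.ext (by omega)
          rcases Nat.lt_or_ge (j : ℕ) s with hjs | hjs
          · rw [hiS', upd_eq j hjs, upd_S]
            constructor
            · exact symFwd P τ K hτ hP0 hτK v (x j) hvK (hxK j) (hvj j hjs).1
            · exact hbwd j hjs
          · have hjS : j = iS := Fin.ext (by omega)
            exact absurd (hiS'.trans hjS.symm) hij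
  obtain ⟨x, hxK, hx⟩ := main n le_rfl
  refine ⟨fun i => (τ : ℤ) * (x i), ?_⟩
  intro i j hij
  have h := hx i j i.isLt j.isLt hij
  exact ⟨disj_of_sym P τ hP0 hτ _ _ h.1, disj_of_sym P τ hP0 hτ _ _ h.2⟩
end

section
/- Existence of compact assignments: in the star model with zero waiting, if there exists a valid assignment, then there exists a valid compact assignment. -/
/-- The assignment `m` with `1` subtracted from the offsets of the routes in `T`. -/
def shiftDown {n : ℕ} (m : Fin n → ℤ) (T : Finset (Fin n)) : Fin n → ℤ :=
  fun i => if i ∈ T then m i - 1 else m i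

/-- Routes `i` and `j` collide under `m`: their forward slot sets intersect or
their backward slot sets intersect. -/
def CollideZW (n P τ : ℕ) (lam : Fin n → ℕ) (m : Fin n → ℤ) (i j : Fin n) : Prop :=
  (fwdSlots n P τ m i ∩ fwdSlots n P τ m j).Nonempty ∨
  (bwdSlots n P τ lam m i ∩ bwdSlots n P τ lam m j).Nonempty

/-- A valid assignment `m` is compact if there is an index `i₀` such that for
every nonempty set `T` of indices avoiding `i₀`, subtracting `1` from the
offsets of the routes in `T` creates a collision between some route of `T` and
some route outside `T`. -/
def CompactZW (n P τ : ℕ) (lam : Fin n → ℕ) (m : Fin n → ℤ) : Prop :=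
  ∃ i₀ : Fin n, ∀ T : Finset (Fin n), T.Nonempty → i₀ ∉ T →
    ∃ i ∈ T, ∃ j : Fin n, j ∉ T ∧ CollideZW n P τ lam (shiftDown m T) i j

lemma mem_slotSet_sub_one {P τ : ℕ} {t : ℤ} {s : ZMod P} :
    s ∈ slotSet P τ (t - 1) ↔ s + 1 ∈ slotSet P τ t := by
  constructor
  · rintro ⟨k, hk, rfl⟩
    exact ⟨k, hk, by push_cast; ring⟩
  · rintro ⟨k, hk, h⟩
    refine ⟨k, hk, ?_⟩
    have hs : s = ((t + k : ℤ) : ZMod P) - 1 := by rw [← h]; ring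
    rw [hs]; push_cast; ring

lemma disjoint_slot_shift {P τ : ℕ} {a b : ℤ}
    (h : Disjoint (slotSet P τ a) (slotSet P τ b)) :
    Disjoint (slotSet P τ (a - 1)) (slotSet P τ (b - 1)) := by
  rw [Set.disjoint_left] at h ⊢
  intro s hs hs'
  exact h (mem_slotSet_sub_one.mp hs) (mem_slotSet_sub_one.mp hs')

lemma valid_shift {n P τ : ℕ} {lam : Fin n → ℕ} {m : Fin n → ℤ} {T : Finset (Fin n)}
    (hv : ValidZW n P τ lam m)
    (hnc : ∀ i ∈ T, ∀ j, j ∉ T → ¬ CollideZW n P τ lam (shiftDown m T) i j) :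
    ValidZW n P τ lam (shiftDown m T) := by
  intro i j hij
  by_cases hi : i ∈ T <;> by_cases hj : j ∈ T
  · obtain ⟨hf, hb⟩ := hv i j hij
    constructor
    · simpa [fwdSlots, shiftDown, hi, hj] using disjoint_slot_shift hf
    · have := disjoint_slot_shift hb
      simpa [bwdSlots, shiftDown, hi, hj, sub_add_eq_add_sub] using this
  · have h := hnc i hi j hj
    rw [CollideZW, not_or] at h
    exact ⟨Set.disjoint_iff_inter_eq_empty.mpr (Set.not_nonempty_iff_eq_empty.mp h.1),
      Set.disjoint_iff_inter_eq_empty.mpr (Set.not_nonempty_iff_eq_empty.mp h.2)⟩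
  · have h := hnc j hj i hi
    rw [CollideZW, not_or] at h
    exact ⟨(Set.disjoint_iff_inter_eq_empty.mpr (Set.not_nonempty_iff_eq_empty.mp h.1)).symm,
      (Set.disjoint_iff_inter_eq_empty.mpr (Set.not_nonempty_iff_eq_empty.mp h.2)).symm⟩
  · obtain ⟨hf, hb⟩ := hv i j hij
    constructor
    · simpa [fwdSlots, shiftDown, hi, hj] using hf
    · simpa [bwdSlots, shiftDown, hi, hj] using hb

lemma mod_ne_zero {n P τ : ℕ} (hτ : 1 ≤ τ) {lam : Fin n → ℕ} {m : Fin n → ℤ}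
    (hv : ValidZW n P τ lam m) {i j : Fin n} (hij : i ≠ j) :
    (m i - m j) % (P : ℤ) ≠ 0 := by
  intro h
  have hd := (hv i j hij).1
  have hc : ((m i : ℤ) : ZMod P) = ((m j : ℤ) : ZMod P) := by
    have h0 : ((m i - m j : ℤ) : ZMod P) = 0 := by
      rw [ZMod.intCast_zmod_eq_zero_iff_dvd]
      exact Int.dvd_of_emod_eq_zero h
    push_cast at h0
    exact sub_eq_zero.mp h0
  have hmem : ((m i : ℤ) : ZMod P) ∈ fwdSlots n P τ m i :=
    ⟨0, hτ, by push_cast; ring⟩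
  have hmem' : ((m i : ℤ) : ZMod P) ∈ fwdSlots n P τ m j :=
    ⟨0, hτ, by rw [hc]; push_cast; ring⟩
  exact Set.disjoint_left.mp hd hmem hmem'

/-- Existence of compact assignments: if there is a valid assignment in the star
model with zero waiting, then there is a valid compact assignment. -/
theorem exists_compact_assignment (n P τ : ℕ) (hn : 1 ≤ n) (hP : 1 ≤ P)
    (hτ : 1 ≤ τ) (lam : Fin n → ℕ)
    (h : ∃ m : Fin n → ℤ, ValidZW n P τ lam m) :
    ∃ m : Fin n → ℤ, ValidZW n P τ lam m ∧ CompactZW n P τ lam m := by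
  classical
  obtain ⟨m₀, hm₀⟩ := h
  set i₀ : Fin n := ⟨0, hn⟩ with hi₀
  let μ : (Fin n → ℤ) → ℕ := fun m => ∑ i, ((m i - m i₀) % (P : ℤ)).toNat
  suffices H : ∀ N : ℕ, ∀ m : Fin n → ℤ, μ m = N → ValidZW n P τ lam m →
      ∃ m' : Fin n → ℤ, ValidZW n P τ lam m' ∧ CompactZW n P τ lam m' by
    exact H (μ m₀) m₀ rfl hm₀
  intro N
  induction N using Nat.strong_induction_on with
  | _ N IH =>
    intro m hμ hv
    by_cases hc : CompactZW n P τ lam m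
    · exact ⟨m, hv, hc⟩
    rw [CompactZW] at hc
    push_neg at hc
    obtain ⟨T, hTne, hTi₀, hT⟩ := hc i₀
    have hv' : ValidZW n P τ lam (shiftDown m T) := by
      apply valid_shift hv
      intro i hi j hj
      exact hT i hi j hj
    have hstep : ∀ i ∈ T, ((shiftDown m T i - shiftDown m T i₀) % (P : ℤ)).toNat <
        ((m i - m i₀) % (P : ℤ)).toNat := by
      intro i hi
      have hne : i ≠ i₀ := fun h => hTi₀ (h ▸ hi)
      have hm0 : (m i - m i₀) % (P : ℤ) ≠ 0 := mod_ne_zero hτ hv hne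
      have hPpos : (0 : ℤ) < P := by exact_mod_cast hP
      have hge : 0 ≤ (m i - m i₀) % (P : ℤ) := Int.emod_nonneg _ (by omega)
      have hltP : (m i - m i₀) % (P : ℤ) < P := Int.emod_lt_of_pos _ hPpos
      have heq : shiftDown m T i = m i - 1 := by simp [shiftDown, hi]
      have heq0 : shiftDown m T i₀ = m i₀ := by simp [shiftDown, hTi₀]
      rw [heq, heq0]
      have hsub : (m i - 1 - m i₀) % (P : ℤ) = (m i - m i₀) % (P : ℤ) - 1 := by
        have h1 : (m i - 1 - m i₀) = (m i - m i₀) - 1 := by ring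
        rw [h1, Int.sub_emod, Int.emod_eq_of_lt (by norm_num) (by omega : (1 : ℤ) < P)]
        exact Int.emod_eq_of_lt (by omega) (by omega)
      rw [hsub]
      omega
    have hlt : μ (shiftDown m T) < μ m := by
      simp only [μ]
      apply Finset.sum_lt_sum
      · intro i _
        by_cases hi : i ∈ T
        · exact le_of_lt (hstep i hi)
        · simp [shiftDown, hi, hTi₀]
      · obtain ⟨i, hi⟩ := hTne
        exact ⟨i, Finset.mem_univ i, hstep i hi⟩
    exact IH (μ (shiftDown m T)) (hμ ▸ hlt) _ rfl hv'
end

section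
/- Normalization of periodic single-machine schedules: if a feasible schedule exists, then there exists a feasible schedule y with additionally y i ≤ 2·P − τ for every i. -/
/-- Feasibility for periodic single-machine scheduling: the job `i0` is
scheduled at time `0`, every job is scheduled between its release time and its
deadline, and the slot sets of distinct jobs are pairwise disjoint. -/
def FeasibleSchedule (n P τ : ℕ) (RT : Fin n → ℕ) (D : Fin n → ℤ) (i0 : Fin n)
    (y : Fin n → ℤ) : Prop :=
  y i0 = 0 ∧
  (∀ i : Fin n, (RT i : ℤ) ≤ y i ∧ y i ≤ D i) ∧
  (∀ i j : Fin n, i ≠ j → Disjoint (slotSet P τ (y i)) (slotSet P τ (y j)))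

/-- Normalization of periodic single-machine schedules: if a feasible schedule
exists, then there is a feasible schedule `y` with `y i ≤ 2·P − τ` for all `i`. -/
theorem schedule_normalization (n P τ : ℕ) (hn : 0 < n) (hτ : 1 ≤ τ)
    (hτP : τ ≤ P) (RT : Fin n → ℕ) (D : Fin n → ℤ)
    (hRT0 : RT ⟨0, hn⟩ = 0) (hRT : ∀ i : Fin n, RT i < P)
    (h : ∃ y : Fin n → ℤ, FeasibleSchedule n P τ RT D ⟨0, hn⟩ y) :
    ∃ y : Fin n → ℤ, FeasibleSchedule n P τ RT D ⟨0, hn⟩ y ∧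
      ∀ i : Fin n, y i ≤ 2 * (P : ℤ) - (τ : ℤ) := by
  obtain ⟨y, hy0, hybd, hydisj⟩ := h
  set i0 : Fin n := ⟨0, hn⟩ with hi0
  have hPpos : (0:ℤ) < (P:ℤ) := by exact_mod_cast lt_of_lt_of_le hτ hτP
  set y' : Fin n → ℤ := fun i => (RT i : ℤ) + (y i - RT i) % (P:ℤ) with hy'def
  have hnonneg : ∀ i, (0:ℤ) ≤ y i - RT i := fun i => sub_nonneg.2 (hybd i).1
  have hcast : ∀ i, ((y' i : ZMod P)) = ((y i : ZMod P)) := by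
    intro i
    have hyi : y i = y' i + (P:ℤ) * ((y i - RT i) / (P:ℤ)) := by
      simp only [hy'def]
      rw [Int.emod_def]; ring
    rw [hyi]
    push_cast
    simp
  have hslot : ∀ i, slotSet P τ (y' i) = slotSet P τ (y i) := by
    intro i
    unfold slotSet
    ext s
    constructor <;> rintro ⟨k, hk, rfl⟩ <;> refine ⟨k, hk, ?_⟩ <;>
      push_cast <;> rw [hcast i]
  have hy'0 : y' i0 = 0 := by
    simp only [hy'def]
    rw [hRT0, hi0] at *
    simp [hy0, hRT0]
    change (P:ℤ) ∣ y i0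
    rw [hy0]; exact dvd_zero _
  have hy'le : ∀ i, y' i ≤ y i := by
    intro i
    have hd : 0 ≤ (P:ℤ) * ((y i - RT i) / (P:ℤ)) :=
      mul_nonneg (le_of_lt hPpos) (Int.ediv_nonneg (hnonneg i) (le_of_lt hPpos))
    have he := Int.emod_def (y i - RT i) (P:ℤ)
    simp only [hy'def]
    linarith
  have hy'lb : ∀ i, (RT i : ℤ) ≤ y' i := by
    intro i
    have := Int.emod_nonneg (y i - RT i) (ne_of_gt hPpos)
    simp only [hy'def]; omega
  have hy'lt : ∀ i, y' i < 2 * (P:ℤ) := by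
    intro i
    have h1 := Int.emod_lt_of_pos (y i - RT i) hPpos
    have h2 : (RT i : ℤ) < P := by exact_mod_cast hRT i
    simp only [hy'def]; omega
  have hfeas : FeasibleSchedule n P τ RT D i0 y' := by
    refine ⟨hy'0, fun i => ⟨hy'lb i, le_trans (hy'le i) (hybd i).2⟩, ?_⟩
    intro i j hij
    rw [hslot i, hslot j]
    exact hydisj i j hij
  refine ⟨y', hfeas, ?_⟩
  intro i
  by_contra hgt
  push_neg at hgt
  have hne : i ≠ i0 := by
    intro hieq
    rw [hieq, hy'0] at hgt
    have : (τ:ℤ) ≤ P := by exact_mod_cast hτP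
    omega
  have hdisj := hfeas.2.2 i i0 hne
  have hmem1 : (0 : ZMod P) ∈ slotSet P τ (y' i) := by
    refine ⟨(2 * (P:ℤ) - y' i).toNat, ?_, ?_⟩
    · have := hy'lt i; omega
    · have hcast2 : ((2 * (P:ℤ) - y' i).toNat : ℤ) = 2 * (P:ℤ) - y' i := by
        have := hy'lt i; omega
      rw [show ((y' i + ((2 * (P:ℤ) - y' i).toNat : ℕ) : ℤ)) = 2 * (P:ℤ) by
        rw [hcast2]; ring]
      push_cast
      simp
  have hmem2 : (0 : ZMod P) ∈ slotSet P τ (y' i0) := by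
    refine ⟨0, hτ, ?_⟩
    rw [hy'0]; simp
  exact Set.disjoint_left.mp hdisj hmem1 hmem2
end

section
/- Reversal of assignments: let (V, ω, r_1, …, r_n) be a routed network with ω symmetric (ω(u,v) = ω(v,u) for all u, v), and let m be a (P,τ)-periodic assignment of it. Then the reversed routes r̄_1, …, r̄_n (each route listed in the opposite order), with offsets m'_i = −(m_i + λ(r_i)), form a (P,τ)-periodic assignment of the reversed routed network: no two distinct reversed routes collide. -/
/-- The length of a route: the sum of the weights of all its arcs. -/
def routeLen {V : Type*} (ω : V → V → ℕ) (r : List V) : ℕ :=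
  ((arcs r).map fun p => ω p.1 p.2).sum


section Aux
variable {V : Type*} (ω : V → V → ℕ)

theorem length_arcs' (l : List V) : (List.zip l l.tail).length = l.length - 1 := by
  simp [List.length_zip]

theorem length_arcs (l : List V) : (arcs l).length = l.length - 1 :=
  length_arcs' l

theorem getElem_arcs (l : List V) (i : ℕ) (h : i + 1 < l.length) :
    (arcs l)[i]'(by rw [length_arcs]; omega) = (l[i]'(by omega), l[i+1]'h) := by
  have : (List.zip l l.tail)[i]'(by rw [length_arcs']; omega) =
      (l[i]'(by omega), l.tail[i]'(by simp [List.length_tail]; omega)) :=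
    List.getElem_zip
  rw [List.getElem_tail] at this
  exact this

theorem weights_reverse (hsym : ∀ u v : V, ω u v = ω v u) (l : List V) :
    ((arcs l.reverse).map fun p => ω p.1 p.2) =
      ((arcs l).map fun p => ω p.1 p.2).reverse := by
  apply List.ext_getElem
  · simp [length_arcs]
  · intro i h1 h2
    have hlen1 : (arcs l.reverse).length = l.length - 1 := by
      rw [length_arcs]; simp
    have hlen : i + 1 < l.length := by
      simp [hlen1] at h1; omega
    have h1' : i + 1 < l.reverse.length := by simpa using hlen
    rw [List.getElem_map, List.getElem_reverse, List.getElem_map]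
    rw [getElem_arcs l.reverse i (by simpa using hlen)]
    have hi2 : (((arcs l).map fun p => ω p.1 p.2).length - 1 - i) + 1 < l.length := by
      simp [length_arcs] at h2 ⊢; omega
    rw [getElem_arcs l _ hi2]
    simp only [List.getElem_reverse]
    have e1 : l.length - 1 - i = (((arcs l).map fun p => ω p.1 p.2).length - 1 - i) + 1 := by
      simp [length_arcs] at h2 ⊢; omega
    have e2 : l.length - 1 - (i+1) = ((arcs l).map fun p => ω p.1 p.2).length - 1 - i := by
      simp [length_arcs] at h2 ⊢; omega
    simp only [e1, e2]
    exact hsym _ _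

theorem latency_add_latency (hsym : ∀ u v : V, ω u v = ω v u) (l : List V) (i : ℕ) :
    latency ω l.reverse i + latency ω l (l.length - 1 - i) = routeLen ω l := by
  set W : List ℕ := (arcs l).map fun p => ω p.1 p.2 with hW
  have hWlen : W.length = l.length - 1 := by rw [hW, List.length_map, length_arcs]
  have h1 : latency ω l.reverse i = (W.drop (l.length - 1 - i)).sum := by
    unfold latency
    rw [weights_reverse ω hsym l, ← hW, List.take_reverse, List.sum_reverse, hWlen]
  rw [h1]
  unfold latency routeLen
  rw [← hW, Nat.add_comm]
  exact List.sum_take_add_sum_drop W _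

theorem latency_succ (l : List V) (i : ℕ) (h : i + 1 < l.length) :
    latency ω l (i + 1) = latency ω l i + ω (l[i]'(by omega)) (l[i+1]'h) := by
  unfold latency
  have hi : i < ((arcs l).map fun p => ω p.1 p.2).length := by
    simp [length_arcs]; omega
  rw [List.sum_take_succ _ _ hi, List.getElem_map, getElem_arcs l i h]

end Aux

theorem getElem_idx_congr {V : Type*} (l : List V) {i j : ℕ} (hij : i = j)
    (hi : i < l.length) : l[i]'hi = l[j]'(hij ▸ hi) := by subst hij; rfl


/-- Reversal of assignments: if `ω` is symmetric and `m` is a `(P,τ)`-periodic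
assignment of a routed network, then the reversed routes, with offsets
`m'_i = -(m_i + λ(r_i))`, form a `(P,τ)`-periodic assignment of the reversed
routed network. -/
theorem reversal_of_assignment {V ι : Type*} [Fintype V] [Fintype ι]
    (ω : V → V → ℕ) (hsym : ∀ u v : V, ω u v = ω v u)
    (routes : ι → List V) (hnd : ∀ i, (routes i).Nodup)
    (P τ : ℕ) (hP : 1 ≤ P) (hτ : 1 ≤ τ) (m : ι → ℤ)
    (h : IsPeriodicAssignment ω routes P τ m) :
    IsPeriodicAssignment ω (fun i => (routes i).reverse) P τ
      (fun i => -(m i + (routeLen ω (routes i) : ℤ))) := by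
  intro a b hab hc
  obtain ⟨i, j, hi, hj, he1, he2, s, hs1, hs2⟩ := hc
  simp only [List.length_reverse] at hi hj
  have hv1 : (routes a)[(routes a).length - 1 - i]'(by omega)
      = (routes b)[(routes b).length - 1 - j]'(by omega) := by
    have h1 : i < (routes a).reverse.length := by simp; omega
    have h2 : j < (routes b).reverse.length := by simp; omega
    have := he1
    rw [List.getElem?_eq_getElem h1,
      List.getElem?_eq_getElem h2] at this
    have h3 := Option.some.inj this
    rwa [List.getElem_reverse, List.getElem_reverse] at h3
  have hv2 : (routes a)[(routes a).length - 1 - (i + 1)]'(by omega)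
      = (routes b)[(routes b).length - 1 - (j + 1)]'(by omega) := by
    have h1 : i + 1 < (routes a).reverse.length := by simp; omega
    have h2 : j + 1 < (routes b).reverse.length := by simp; omega
    have := he2
    rw [List.getElem?_eq_getElem h1,
      List.getElem?_eq_getElem h2] at this
    have h3 := Option.some.inj this
    rwa [List.getElem_reverse, List.getElem_reverse] at h3
  have hi'lt : ((routes a).length - 2 - i) + 1 < (routes a).length := by omega
  have hj'lt : ((routes b).length - 2 - j) + 1 < (routes b).length := by omega
  have hveq1 : (routes a)[(routes a).length - 2 - i]'(by omega)
      = (routes b)[(routes b).length - 2 - j]'(by omega) := by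
    rw [getElem_idx_congr (routes a) (by omega : (routes a).length - 2 - i
        = (routes a).length - 1 - (i + 1)),
      getElem_idx_congr (routes b) (by omega : (routes b).length - 2 - j
        = (routes b).length - 1 - (j + 1))]
    exact hv2
  have hveq2 : (routes a)[((routes a).length - 2 - i) + 1]'hi'lt
      = (routes b)[((routes b).length - 2 - j) + 1]'hj'lt := by
    rw [getElem_idx_congr (routes a) (by omega : ((routes a).length - 2 - i) + 1
        = (routes a).length - 1 - i),
      getElem_idx_congr (routes b) (by omega : ((routes b).length - 2 - j) + 1
        = (routes b).length - 1 - j)]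
    exact hv1
  have hla : (latency ω (routes a).reverse i : ℤ) =
      (routeLen ω (routes a) : ℤ)
        - (latency ω (routes a) ((routes a).length - 2 - i) : ℤ)
        - (ω ((routes a)[(routes a).length - 2 - i]'(by omega))
            ((routes a)[((routes a).length - 2 - i) + 1]'hi'lt) : ℤ) := by
    have h1 := latency_add_latency ω hsym (routes a) i
    have h2 := latency_succ ω (routes a) ((routes a).length - 2 - i) hi'lt
    rw [show (routes a).length - 1 - i = ((routes a).length - 2 - i) + 1 from by omega] at h1
    omega
  have hlb : (latency ω (routes b).reverse j : ℤ) =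
      (routeLen ω (routes b) : ℤ)
        - (latency ω (routes b) ((routes b).length - 2 - j) : ℤ)
        - (ω ((routes a)[(routes a).length - 2 - i]'(by omega))
            ((routes a)[((routes a).length - 2 - i) + 1]'hi'lt) : ℤ) := by
    have h1 := latency_add_latency ω hsym (routes b) j
    have h2 := latency_succ ω (routes b) ((routes b).length - 2 - j) hj'lt
    rw [show (routes b).length - 1 - j = ((routes b).length - 2 - j) + 1 from by omega] at h1
    rw [← hveq1, ← hveq2] at h2
    omega
  obtain ⟨k, hk, hsk⟩ := hs1
  obtain ⟨k', hk', hsk'⟩ := hs2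
  apply h a b hab
  refine ⟨(routes a).length - 2 - i, (routes b).length - 2 - j, hi'lt, hj'lt, ?_, ?_, ?_⟩
  · rw [
      List.getElem?_eq_getElem (by omega : (routes a).length - 2 - i < (routes a).length),
      List.getElem?_eq_getElem (by omega : (routes b).length - 2 - j < (routes b).length)]
    exact congrArg some hveq1
  · rw [
      List.getElem?_eq_getElem hi'lt, List.getElem?_eq_getElem hj'lt]
    exact congrArg some hveq2
  · have key : ((m a + (latency ω (routes a) ((routes a).length - 2 - i) : ℤ) + (k' : ℤ) : ℤ) : ZMod P)
        = ((m b + (latency ω (routes b) ((routes b).length - 2 - j) : ℤ) + (k : ℤ) : ℤ) : ZMod P) := by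
      have e := hsk
      have e' := hsk'
      rw [hla] at e
      rw [hlb] at e'
      have hee := e.symm.trans e'
      push_cast at hee ⊢
      linear_combination -hee
    exact ⟨_, ⟨k', hk', rfl⟩, ⟨k, hk, key⟩⟩
end
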